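/- arXiv:2312.09319 — 5 statements merged into one kernel-verified Lean document; each statement's English description precedes it below -/
import Mathlib

section
/- Let β > 0, F ≥ 0, λ_n ≥ 0, and λ_τ, v ∈ ℝ^{d−1}. Denote by [·]_α the projection onto the closed ball of radius α = F λ_n centered at 0. Then λ_τ = [λ_τ + β v]_{F λ_n} holds if and only if: |λ_τ| ≤ F λ_n, and λ_τ · v − F λ_n |v| = 0. -/
open scoped RealInnerProductSpace

/-- Projection onto the closed ball of radius `α` centered at `0`. -/
noncomputable def ballProj {m : ℕ} (α : ℝ) (x : EuclideanSpace ℝ (Fin m)) :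
    EuclideanSpace ℝ (Fin m) :=
  if ‖x‖ ≤ α then x else (α / ‖x‖) • x

theorem coulomb_fixed_point_equiv {d : ℕ} (β F lamN : ℝ)
    (hβ : 0 < β) (hF : 0 ≤ F) (hlamN : 0 ≤ lamN)
    (lamT v : EuclideanSpace ℝ (Fin (d - 1))) :
    lamT = ballProj (F * lamN) (lamT + β • v) ↔
      (‖lamT‖ ≤ F * lamN ∧ ⟪lamT, v⟫ - F * lamN * ‖v‖ = 0) := by
  set α := F * lamN with hαdef
  have hα0 : 0 ≤ α := mul_nonneg hF hlamN
  set x := lamT + β • v with hxdef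
  unfold ballProj
  constructor
  · intro h
    by_cases hc : ‖x‖ ≤ α
    · rw [if_pos hc] at h
      have hbv : β • v = 0 := (left_eq_add.mp h)
      have hv : v = 0 := by
        rcases smul_eq_zero.mp hbv with h' | h'
        · exact absurd h' (ne_of_gt hβ)
        · exact h'
      subst hv
      rw [hxdef] at hc
      constructor
      · simpa using hc
      · simp
    · rw [if_neg hc] at h
      push_neg at hc
      have hx0 : 0 < ‖x‖ := lt_of_le_of_lt hα0 hc
      have hxne : ‖x‖ ≠ 0 := ne_of_gt hx0
      have hnormT : ‖lamT‖ = α := by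
        rw [h, norm_smul, Real.norm_eq_abs, abs_of_nonneg (div_nonneg hα0 hx0.le),
          div_mul_cancel₀ _ hxne]
      have hbveq : β • v = (1 - α / ‖x‖) • x := by
        have : x - lamT = β • v := by
          rw [hxdef]; abel
        rw [← this, h, sub_smul, one_smul]
      set t : ℝ := 1 - α / ‖x‖ with htdef
      have ht0 : 0 < t := by
        rw [htdef]
        have : α / ‖x‖ < 1 := (div_lt_one hx0).mpr hc
        linarith
      have hveq : v = (t / β) • x := by
        have : v = β⁻¹ • (β • v) := by
          rw [smul_smul, inv_mul_cancel₀ (ne_of_gt hβ), one_smul]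
        rw [this, hbveq, smul_smul]
        ring_nf
      constructor
      · rw [hnormT]
      · rw [hveq, h, real_inner_smul_left, real_inner_smul_right,
          real_inner_self_eq_norm_sq, norm_smul, Real.norm_eq_abs,
          abs_of_nonneg (div_nonneg ht0.le hβ.le)]
        field_simp
        ring
  · rintro ⟨h1, h2⟩
    by_cases hv : v = 0
    · subst hv
      have : x = lamT := by rw [hxdef]; simp
      rw [if_pos (by rw [this]; exact h1), this]
    · have hvn : 0 < ‖v‖ := norm_pos_iff.mpr hv
      have hinner : ⟪lamT, v⟫ = α * ‖v‖ := by linarith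
      have hcs : ⟪lamT, v⟫ ≤ ‖lamT‖ * ‖v‖ := real_inner_le_norm lamT v
      have hnormT : ‖lamT‖ = α := by
        have h3 : α * ‖v‖ ≤ ‖lamT‖ * ‖v‖ := by linarith
        have h4 : α ≤ ‖lamT‖ := le_of_mul_le_mul_right h3 hvn
        linarith
      have heq : ⟪lamT, v⟫ = ‖lamT‖ * ‖v‖ := by rw [hnormT]; exact hinner
      have hcol : ‖v‖ • lamT = ‖lamT‖ • v := inner_eq_norm_mul_iff_real.mp heq
      rcases eq_or_lt_of_le hα0 with hα | hα
      · -- α = 0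
        have hT0 : lamT = 0 := norm_eq_zero.mp (by rw [hnormT, ← hα])
        have hxv : x = β • v := by rw [hxdef, hT0, zero_add]
        have hxn : α < ‖x‖ := by
          rw [hxv, norm_smul, Real.norm_eq_abs, abs_of_pos hβ, ← hα]
          positivity
        rw [if_neg (not_le.mpr hxn), hT0, ← hα]
        simp
      · -- α > 0
        have hveq : v = (‖v‖ / α) • lamT := by
          have : α • v = ‖v‖ • lamT := by rw [hcol, hnormT]
          calc v = α⁻¹ • (α • v) := by
                rw [smul_smul, inv_mul_cancel₀ (ne_of_gt hα), one_smul]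
            _ = α⁻¹ • (‖v‖ • lamT) := by rw [this]
            _ = (‖v‖ / α) • lamT := by rw [smul_smul]; ring_nf
        have hbv : β • v = (β * (‖v‖ / α)) • lamT := by
          have := congrArg (fun w => β • w) hveq
          simpa [smul_smul] using this
        have hxeq : x = (1 + β * ‖v‖ / α) • lamT := by
          rw [hxdef, hbv]
          module
        have hcpos : 0 < 1 + β * ‖v‖ / α := by positivity
        have hxn : ‖x‖ = α + β * ‖v‖ := by
          rw [hxeq, norm_smul, Real.norm_eq_abs, abs_of_pos hcpos, hnormT]
          field_simp
        have hxgt : α < ‖x‖ := by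
          rw [hxn]; nlinarith
        rw [if_neg (not_le.mpr hxgt), hxn, hxeq, smul_smul]
        have : α / (α + β * ‖v‖) * (1 + β * ‖v‖ / α) = 1 := by
          field_simp
        rw [this, one_smul]
end

section
/- Let K ⊂ ℝ^d be a polytope with vertices (x_s)_{s∈V_K} and nonnegative weights (ω_s^K) satisfying Σ_s ω_s^K = 1 and Σ_s ω_s^K x_s = x̄_K (the centroid of K). Define the reconstruction Π^K v = G (x − x̄_K) + Σ_s ω_s^K v(x_s) where G ∈ ℝ^{d×d} is the discrete gradient ∇^K of the vertex values. If q ∈ P¹(K)^d is an affine function, then ∇^K (vertex values of q) = ∇q and Π^K (vertex values of q) = q, i.e., the reconstruction operators are exact on affine functions. -/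
open scoped RealInnerProductSpace

/-- P¹-exactness of the cell reconstruction operators `∇^K` and `Π^K`.
`V` indexes the vertices `x`, `ι` indexes the faces; `m σ` is the face area,
`n σ` the outward unit normal, `w σ` the face barycentric weights (with centroid `c σ`),
`ωK` the cell barycentric weights (with centroid `xK`), and `vol = |K|`.
The geometric identities `Σ |σ| n_{Kσ} = 0` and `Σ |σ| x̄_σ ⊗ n_{Kσ} = |K| Id`
(consequences of the divergence theorem) are assumed.  If `q` is affine,
`q x = A x + c₀`, then the discrete gradient of its vertex values equals `∇q = A`
and the linear reconstruction reproduces `q`. -/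
theorem reconstruction_exact_on_affine {d : ℕ} {V ι : Type*} [Fintype V] [Fintype ι]
    (x : V → EuclideanSpace ℝ (Fin d))
    (m : ι → ℝ) (n c : ι → EuclideanSpace ℝ (Fin d))
    (w : ι → V → ℝ) (ωK : V → ℝ) (xK : EuclideanSpace ℝ (Fin d)) (vol : ℝ)
    (hm : ∀ σ, 0 < m σ) (hvol : 0 < vol)
    (hw0 : ∀ σ s, 0 ≤ w σ s) (hw1 : ∀ σ, ∑ s, w σ s = 1)
    (hwc : ∀ σ, ∑ s, w σ s • x s = c σ)
    (hω0 : ∀ s, 0 ≤ ωK s) (hω1 : ∑ s, ωK s = 1)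
    (hωc : ∑ s, ωK s • x s = xK)
    (hgeom0 : ∑ σ, m σ • n σ = 0)
    (hgeom1 : ∀ y : EuclideanSpace ℝ (Fin d),
      ∑ σ, (m σ * ⟪n σ, y⟫) • c σ = vol • y)
    (A : EuclideanSpace ℝ (Fin d) →L[ℝ] EuclideanSpace ℝ (Fin d))
    (c₀ : EuclideanSpace ℝ (Fin d))
    (q : EuclideanSpace ℝ (Fin d) → EuclideanSpace ℝ (Fin d))
    (hq : ∀ y, q y = A y + c₀) :
    -- discrete gradient of the vertex values of `q` equals `∇q = A` …
    (∀ y : EuclideanSpace ℝ (Fin d),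
      vol⁻¹ • (∑ σ, (m σ * ⟪n σ, y⟫) • (∑ s, w σ s • q (x s))) = A y) ∧
    -- … and the reconstruction `Π^K` reproduces `q`
    (∀ z : EuclideanSpace ℝ (Fin d),
      vol⁻¹ • (∑ σ, (m σ * ⟪n σ, z - xK⟫) • (∑ s, w σ s • q (x s)))
        + ∑ s, ωK s • q (x s) = q z) := by
  have hface : ∀ σ, (∑ s, w σ s • q (x s)) = A (c σ) + c₀ := by
    intro σ
    have : (∑ s, w σ s • q (x s)) = A (∑ s, w σ s • x s) + (∑ s, w σ s) • c₀ := by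
      simp only [hq, smul_add, ← map_smul]
      rw [Finset.sum_add_distrib, ← map_sum, ← Finset.sum_smul]
    rw [this, hwc, hw1, one_smul]
  have key : ∀ y : EuclideanSpace ℝ (Fin d),
      (∑ σ, (m σ * ⟪n σ, y⟫) • (∑ s, w σ s • q (x s))) = vol • A y := by
    intro y
    have h0 : (∑ σ, (m σ * ⟪n σ, y⟫)) = 0 := by
      have := congrArg (fun v => (⟪v, y⟫ : ℝ)) hgeom0
      simpa [sum_inner, real_inner_smul_left, Finset.mul_sum, mul_assoc] using this
    rw [Finset.sum_congr rfl fun σ _ => by rw [hface σ, smul_add]]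
    rw [Finset.sum_add_distrib, ← Finset.sum_smul, h0, zero_smul, add_zero]
    have hA : ∑ σ, (m σ * ⟪n σ, y⟫) • A (c σ) = A (∑ σ, (m σ * ⟪n σ, y⟫) • c σ) := by
      rw [map_sum]; simp only [map_smul]
    rw [hA, hgeom1, map_smul]
  constructor
  · intro y
    rw [key, smul_smul, inv_mul_cancel₀ hvol.ne', one_smul]
  · intro z
    have havg : (∑ s, ωK s • q (x s)) = A xK + c₀ := by
      have : (∑ s, ωK s • q (x s)) = A (∑ s, ωK s • x s) + (∑ s, ωK s) • c₀ := by
        simp only [hq, smul_add, ← map_smul]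
        rw [Finset.sum_add_distrib, ← map_sum, ← Finset.sum_smul]
      rw [this, hωc, hω1, one_smul]
    rw [key, smul_smul, inv_mul_cancel₀ hvol.ne', one_smul, havg, hq, map_sub]
    abel
end

section
/- Let v ∈ C⁰(σ̄)^d satisfy: (i) v vanishes at all vertices of the polygon σ and hence (being edge-wise affine) on ∂σ; (ii) Δ_τ v ∈ P¹(σ)^d; and (iii) ∫_σ v · p = 0 for all p ∈ P¹(σ)^d. Then v ≡ 0 on σ. -/
open scoped RealInnerProductSpace
open MeasureTheory

/-- An affine vector field `ℝ² → ℝ^d`. -/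
def IsAffineField {dd : ℕ} (p : EuclideanSpace ℝ (Fin 2) → EuclideanSpace ℝ (Fin dd)) :
    Prop :=
  ∃ (A : EuclideanSpace ℝ (Fin 2) →L[ℝ] EuclideanSpace ℝ (Fin dd))
    (c : EuclideanSpace ℝ (Fin dd)), ∀ x, p x = A x + c

/-- Componentwise Laplacian of a vector field on the plane. -/
noncomputable def lapl {dd : ℕ}
    (v : EuclideanSpace ℝ (Fin 2) → EuclideanSpace ℝ (Fin dd))
    (x : EuclideanSpace ℝ (Fin 2)) : EuclideanSpace ℝ (Fin dd) :=
  ∑ i : Fin 2,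
    fderiv ℝ (fun y => fderiv ℝ v y (EuclideanSpace.single i 1)) x
      (EuclideanSpace.single i 1)


section VFUAux
open Set Real

notation "E2" => EuclideanSpace ℝ (Fin 2)

noncomputable def vfuChi (t : ℝ) : ℝ := Real.smoothTransition (t^2 - 1)

lemma vfuChi_cont : Continuous vfuChi :=
  Real.smoothTransition.continuous.comp (by continuity)

lemma vfuChi_cont' (n : ℕ) : Continuous (fun t => vfuChi (n * t)) :=
  vfuChi_cont.comp (continuous_const.mul continuous_id)

lemma vfuChi_nonneg (t : ℝ) : 0 ≤ vfuChi t := Real.smoothTransition.nonneg _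
lemma vfuChi_le_one (t : ℝ) : vfuChi t ≤ 1 := Real.smoothTransition.le_one _
lemma vfuChi_zero {t : ℝ} (h : |t| ≤ 1) : vfuChi t = 0 := by
  apply Real.smoothTransition.zero_of_nonpos
  nlinarith [abs_nonneg t, sq_abs t]
lemma vfuChi_one {t : ℝ} (h : Real.sqrt 2 ≤ |t|) : vfuChi t = 1 := by
  apply Real.smoothTransition.one_of_one_le
  have h2 : (2:ℝ) ≤ t^2 := by
    have := Real.sq_sqrt (by norm_num : (2:ℝ) ≥ 0)
    nlinarith [Real.sqrt_nonneg 2, sq_abs t]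
  linarith

lemma abs_le_abs_of_uIcc {s t : ℝ} (ht : t ∈ Set.uIcc 0 s) : |t| ≤ |s| := by
  rcases Set.mem_uIcc.1 ht with ⟨h1, h2⟩ | ⟨h1, h2⟩
  · rw [abs_of_nonneg h1]; exact h2.trans (le_abs_self s)
  · rw [abs_of_nonpos h2]
    calc -t ≤ -s := by linarith
      _ ≤ |s| := neg_le_abs s

/-- smooth truncation: θ_n(s) = ∫_0^s χ(n t) dt -/
noncomputable def vfuTheta (n : ℕ) (s : ℝ) : ℝ := ∫ t in (0:ℝ)..s, vfuChi (n * t)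

lemma vfuTheta_hasDerivAt (n : ℕ) (s : ℝ) :
    HasDerivAt (vfuTheta n) (vfuChi (n * s)) s := by
  have hc := vfuChi_cont' n
  exact intervalIntegral.integral_hasDerivAt_right (hc.intervalIntegrable _ _)
    (hc.stronglyMeasurableAtFilter _ _) hc.continuousAt

lemma vfuTheta_zero {n : ℕ} {s : ℝ} (h : |s| * n ≤ 1) : vfuTheta n s = 0 := by
  rw [vfuTheta, intervalIntegral.integral_congr (g := fun _ => (0:ℝ))]
  · simp
  · intro t ht
    apply vfuChi_zero
    have := abs_le_abs_of_uIcc ht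
    rw [abs_mul, Nat.abs_cast, mul_comm]
    calc |t| * n ≤ |s| * n := by gcongr
      _ ≤ 1 := h

lemma vfuTheta_diff (n : ℕ) (s : ℝ) :
    vfuTheta n s - s = ∫ t in (0:ℝ)..s, (vfuChi (n * t) - 1) := by
  rw [intervalIntegral.integral_sub ((vfuChi_cont' n).intervalIntegrable _ _)
    intervalIntegrable_const, vfuTheta]
  simp

lemma vfuInt_bound {n : ℕ} (a b : ℝ) :
    |∫ t in a..b, (vfuChi (n * t) - 1)| ≤ |b - a| := by
  rw [← Real.norm_eq_abs (∫ t in a..b, _)]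
  calc ‖∫ t in a..b, (vfuChi (n * t) - 1)‖ ≤ 1 * |b - a| := by
        apply intervalIntegral.norm_integral_le_of_norm_le_const
        intro t _
        have := vfuChi_nonneg (n*t); have := vfuChi_le_one (n*t)
        rw [Real.norm_eq_abs, abs_le]; constructor <;> linarith
    _ = |b - a| := one_mul _

/-- key uniform bound |θ_n(s) - s| ≤ √2/n -/
lemma vfuTheta_approx {n : ℕ} (hn : 0 < n) (s : ℝ) :
    |vfuTheta n s - s| ≤ Real.sqrt 2 / n := by
  have hnpos : (0:ℝ) < n := by exact_mod_cast hn
  have hs2 : (0:ℝ) ≤ Real.sqrt 2 / n := by positivity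
  have key : ∀ a : ℝ, |a| ≤ Real.sqrt 2 / n →
      (∀ t ∈ Set.uIcc a s, vfuChi (n*t) = 1) → |vfuTheta n s - s| ≤ Real.sqrt 2 / n := by
    intro a ha hone
    have h2 : (∫ t in (0:ℝ)..s, (vfuChi (n*t) - 1))
        = (∫ t in (0:ℝ)..a, (vfuChi (n*t) - 1)) + ∫ t in a..s, (vfuChi (n*t) - 1) := by
      rw [intervalIntegral.integral_add_adjacent_intervals] <;>
        exact (((vfuChi_cont' n).sub continuous_const).intervalIntegrable _ _)
    have h3 : (∫ t in a..s, (vfuChi (n*t) - 1)) = 0 := by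
      rw [intervalIntegral.integral_congr (g := fun _ => (0:ℝ)), intervalIntegral.integral_zero]
      intro t ht; simp [hone t ht]
    rw [vfuTheta_diff, h2, h3, add_zero]
    calc |∫ t in (0:ℝ)..a, (vfuChi (n*t) - 1)| ≤ |a - 0| := vfuInt_bound 0 a
      _ ≤ Real.sqrt 2 / n := by rw [sub_zero]; exact ha
  rcases le_or_gt (|s|) (Real.sqrt 2 / n) with hs | hs
  · rw [vfuTheta_diff]
    calc |∫ t in (0:ℝ)..s, (vfuChi (n*t) - 1)| ≤ |s - 0| := vfuInt_bound 0 s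
      _ ≤ Real.sqrt 2 / n := by rw [sub_zero]; exact hs
  rcases le_or_gt 0 s with hsgn | hsgn
  · apply key (Real.sqrt 2 / n) (by rw [abs_of_nonneg hs2])
    intro t ht
    apply vfuChi_one
    have hat : Real.sqrt 2 / n ≤ t := by
      rcases Set.mem_uIcc.1 ht with ⟨h1, _⟩ | ⟨h1, h2⟩
      · exact h1
      · rw [abs_of_nonneg hsgn] at hs; linarith
    rw [abs_mul, Nat.abs_cast, abs_of_nonneg (le_trans hs2 hat)]
    calc Real.sqrt 2 = n * (Real.sqrt 2 / n) := by field_simp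
      _ ≤ n * t := by gcongr
  · apply key (-(Real.sqrt 2 / n)) (by rw [abs_neg, abs_of_nonneg hs2])
    intro t ht
    apply vfuChi_one
    have hat : t ≤ -(Real.sqrt 2 / n) := by
      rcases Set.mem_uIcc.1 ht with ⟨h1, h2⟩ | ⟨_, h2⟩
      · rw [abs_of_nonpos hsgn.le] at hs; linarith
      · exact h2
    have htneg : t ≤ 0 := hat.trans (by linarith)
    rw [abs_mul, Nat.abs_cast, abs_of_nonpos htneg]
    calc Real.sqrt 2 = n * (Real.sqrt 2 / n) := by field_simp
      _ ≤ n * (-t) := by gcongr; linarith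

/-- integral of divergence of a compactly supported C¹ family is zero (pi version) -/
lemma vfu_div_integral_zero_pi
    (F : Fin 2 → (Fin 2 → ℝ) → ℝ) (F' : Fin 2 → (Fin 2 → ℝ) → ((Fin 2 → ℝ) →L[ℝ] ℝ))
    (hF : ∀ i x, HasFDerivAt (F i) (F' i x) x)
    (hFc : ∀ i, Continuous (fun x => F' i x))
    (R : ℝ) (hR : 0 < R)
    (hsupp : ∀ i x, R ≤ ‖x‖ → F i x = 0) :
    ∫ x : Fin 2 → ℝ, ∑ i, F' i x (Pi.single i 1) = 0 := by
  set a : Fin 2 → ℝ := fun _ => -(R+1) with ha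
  set b : Fin 2 → ℝ := fun _ => (R+1) with hb
  have hle : a ≤ b := fun i => by simp [ha, hb]; linarith
  have hF'0 : ∀ i x, R < ‖x‖ → F' i x = 0 := by
    intro i x hx
    have hopen : IsOpen {y : Fin 2 → ℝ | R < ‖y‖} := isOpen_lt continuous_const continuous_norm
    have h0 : ∀ᶠ y in nhds x, F i y = 0 := by
      filter_upwards [hopen.mem_nhds hx] with y hy
      exact hsupp i y (le_of_lt hy)
    exact (hF i x).unique ((hasFDerivAt_const (0:ℝ) x).congr_of_eventuallyEq h0)
  have hdiv0 : ∀ x, x ∉ Icc a b → ∑ i, F' i x (Pi.single i 1) = 0 := by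
    intro x hx
    have hnorm : R < ‖x‖ := by
      by_contra h
      push_neg at h
      refine hx ⟨fun i => ?_, fun i => ?_⟩
      · have h1 := norm_le_pi_norm x i
        rw [Real.norm_eq_abs] at h1
        have := neg_abs_le (x i)
        show -(R+1) ≤ x i
        linarith
      · have h1 := norm_le_pi_norm x i
        rw [Real.norm_eq_abs] at h1
        have := le_abs_self (x i)
        show x i ≤ R+1
        linarith
    exact Finset.sum_eq_zero fun i _ => by rw [hF'0 i x hnorm]; rfl
  rw [← setIntegral_eq_integral_of_forall_compl_eq_zero hdiv0]
  have hdivcont : Continuous fun x => ∑ i, F' i x (Pi.single i 1) := by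
    apply continuous_finset_sum
    intro i _
    exact (ContinuousLinearMap.apply ℝ ℝ (Pi.single i 1 : Fin 2 → ℝ)).continuous.comp (hFc i)
  rw [MeasureTheory.integral_divergence_of_hasFDerivAt_off_countable' a b hle
    F F' ∅ countable_empty (fun i x _ => (hF i x).continuousAt.continuousWithinAt)
    (fun x _ i => hF i x)
    (hdivcont.continuousOn.integrableOn_compact isCompact_Icc)]
  -- Each face integral vanishes since the boundary points have a coordinate = ±(R+1)
  apply Finset.sum_eq_zero
  intro i _
  have hface : ∀ (c : ℝ), R ≤ |c| → ∀ y : Fin 1 → ℝ, ∀ j : Fin 2,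
      F j (i.insertNth (α := fun _ => ℝ) c y) = 0 := by
    intro c hc y j
    apply hsupp j
    calc R ≤ |c| := hc
      _ = ‖(i.insertNth (α := fun _ => ℝ) c y) i‖ := by rw [Fin.insertNth_apply_same]; simp
      _ ≤ ‖i.insertNth (α := fun _ => ℝ) c y‖ := norm_le_pi_norm _ i
  have h1 : (∫ x in Icc (a ∘ i.succAbove) (b ∘ i.succAbove), F i (i.insertNth (b i) x)) = 0 := by
    apply setIntegral_eq_zero_of_forall_eq_zero
    intro y _
    exact hface (b i) (by show R ≤ |R+1|; rw [abs_of_nonneg] <;> linarith) y i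
  have h2 : (∫ x in Icc (a ∘ i.succAbove) (b ∘ i.succAbove), F i (i.insertNth (a i) x)) = 0 := by
    apply setIntegral_eq_zero_of_forall_eq_zero
    intro y _
    exact hface (a i) (by show R ≤ |(-(R+1))|; rw [abs_neg, abs_of_nonneg] <;> linarith) y i
  rw [h1, h2, sub_zero]

lemma vfu_coord_le_norm (x : E2) (i : Fin 2) : |x i| ≤ ‖x‖ := by
  rw [EuclideanSpace.norm_eq]
  have : |x i| = Real.sqrt (|x i|^2) := by rw [Real.sqrt_sq_eq_abs]; simp
  rw [this]
  apply Real.sqrt_le_sqrt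
  rw [sq_abs]
  have := Finset.single_le_sum (f := fun j => ‖x j‖^2) (fun j _ => by positivity) (Finset.mem_univ i)
  simpa [Real.norm_eq_abs, sq_abs] using this

lemma vfu_div_integral_zero
    (F : Fin 2 → E2 → ℝ) (F' : Fin 2 → E2 → (E2 →L[ℝ] ℝ))
    (hF : ∀ i x, HasFDerivAt (F i) (F' i x) x)
    (hFc : ∀ i, Continuous (fun x => F' i x))
    (R : ℝ) (hR : 0 < R)
    (hsupp : ∀ i x, R ≤ ‖x‖ → F i x = 0) :
    ∫ x : E2, ∑ i, F' i x (EuclideanSpace.single i 1) = 0 := by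
  set L : E2 ≃L[ℝ] (Fin 2 → ℝ) := EuclideanSpace.equiv (Fin 2) ℝ with hL
  set G : Fin 2 → (Fin 2 → ℝ) → ℝ := fun i y => F i (L.symm y) with hG
  set G' : Fin 2 → (Fin 2 → ℝ) → ((Fin 2 → ℝ) →L[ℝ] ℝ) :=
    fun i y => (F' i (L.symm y)).comp (L.symm : (Fin 2 → ℝ) →L[ℝ] E2) with hG'
  have hGd : ∀ i y, HasFDerivAt (G i) (G' i y) y := fun i y =>
    (hF i (L.symm y)).comp y (L.symm.hasFDerivAt)
  have hGc : ∀ i, Continuous (fun y => G' i y) := fun i =>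
    Continuous.clm_comp ((hFc i).comp L.symm.continuous) continuous_const
  have hGsupp : ∀ i y, R ≤ ‖y‖ → G i y = 0 := by
    intro i y hy
    apply hsupp i
    calc R ≤ ‖y‖ := hy
      _ ≤ ‖L.symm y‖ := by
        apply pi_norm_le_iff_of_nonneg (norm_nonneg _) |>.2
        intro j
        rw [Real.norm_eq_abs]
        exact vfu_coord_le_norm (L.symm y) j
  have h0 := vfu_div_integral_zero_pi G G' hGd hGc R hR hGsupp
  have hmp := EuclideanSpace.volume_preserving_symm_measurableEquiv_toLp (Fin 2)
  have hemb : MeasurableEmbedding (MeasurableEquiv.toLp 2 (Fin 2 → ℝ)).symm :=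
    (MeasurableEquiv.toLp 2 (Fin 2 → ℝ)).symm.measurableEmbedding
  have := hmp.integral_comp hemb (fun y => ∑ i, G' i y (Pi.single i 1))
  rw [h0] at this
  rw [← this]
  rfl

lemma vfu_energy (σ : Set E2) (hσopen : IsOpen σ) (hσbd : Bornology.IsBounded σ)
    (u : E2 → ℝ) (hucont : ContinuousOn u (closure σ))
    (husmooth : ContDiffOn ℝ 2 u σ)
    (hbd0 : ∀ x ∈ frontier σ, u x = 0)
    (p : E2 → ℝ) (hp : Continuous p)
    (hlap : ∀ x ∈ σ, (∑ i : Fin 2,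
      fderiv ℝ (fun y => fderiv ℝ u y (EuclideanSpace.single i 1)) x
        (EuclideanSpace.single i 1)) = p x)
    (n : ℕ) :
    IntegrableOn (fun x => vfuChi (n * u x) *
        (∑ i : Fin 2, (fderiv ℝ u x (EuclideanSpace.single i 1))^2)) σ ∧
    IntegrableOn (fun x => vfuTheta n (u x) * p x) σ ∧
    (∫ x in σ, vfuChi (n * u x) *
        (∑ i : Fin 2, (fderiv ℝ u x (EuclideanSpace.single i 1))^2))
      = - ∫ x in σ, vfuTheta n (u x) * p x := by
  classical
  have hσmeas : MeasurableSet σ := hσopen.measurableSet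
  set du : E2 → (E2 →L[ℝ] ℝ) := fun x => fderiv ℝ u x with hdu
  set D2 : Fin 2 → E2 → (E2 →L[ℝ] ℝ) :=
    fun i x => fderiv ℝ (fun y => du y (EuclideanSpace.single i 1)) x with hD2
  set g : E2 → ℝ := fun x => ∑ i : Fin 2, (du x (EuclideanSpace.single i 1))^2 with hg
  -- smoothness consequences
  have hud : ∀ x ∈ σ, HasFDerivAt u (du x) x := by
    intro x hx
    exact ((husmooth.differentiableOn (by norm_num)).differentiableAt
      (hσopen.mem_nhds hx)).hasFDerivAt
  have hducont : ContinuousOn du σ :=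
    husmooth.continuousOn_fderiv_of_isOpen hσopen (by norm_num)
  have hdu1 : ContDiffOn ℝ 1 du σ := husmooth.fderiv_of_isOpen hσopen (by norm_num)
  have hgi1 : ∀ i : Fin 2, ContDiffOn ℝ 1 (fun y => du y (EuclideanSpace.single i 1)) σ :=
    fun i => hdu1.clm_apply contDiffOn_const
  have hgid : ∀ i : Fin 2, ∀ x ∈ σ, HasFDerivAt (fun y => du y (EuclideanSpace.single i 1))
      (D2 i x) x := by
    intro i x hx
    exact (((hgi1 i).differentiableOn (by norm_num)).differentiableAt
      (hσopen.mem_nhds hx)).hasFDerivAt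
  have hD2cont : ∀ i : Fin 2, ContinuousOn (fun x => D2 i x) σ :=
    fun i => (hgi1 i).continuousOn_fderiv_of_isOpen hσopen (by norm_num)
  have hucont' : ContinuousOn u σ := hucont.mono subset_closure
  have hgcont : ContinuousOn g σ := by
    apply continuousOn_finset_sum
    intro i _
    exact ((hducont.clm_apply continuousOn_const)).pow 2
  -- the compact set K ⊆ σ where the truncation lives
  set K : Set E2 := closure σ ∩ {x | 1 ≤ |u x| * n} with hK
  have hKclosed : IsClosed K := by
    apply ContinuousOn.preimage_isClosed_of_isClosed
      (f := fun x => |u x| * n) (t := Ici 1) _ isClosed_closure isClosed_Ici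
    exact (hucont.abs.mul continuousOn_const)
  have hKcpt : IsCompact K := by
    apply Metric.isCompact_of_isClosed_isBounded hKclosed
    exact hσbd.closure.subset inter_subset_left
  have hKσ : K ⊆ σ := by
    rintro x ⟨hx1, hx2⟩
    by_cases h : x ∈ σ
    · exact h
    · exfalso
      have hfr : x ∈ frontier σ := by
        rw [hσopen.frontier_eq]; exact ⟨hx1, h⟩
      have := hbd0 x hfr
      simp only [mem_setOf_eq, this, abs_zero, zero_mul] at hx2
      linarith
  -- truncated vector field and its derivative
  set f : Fin 2 → E2 → ℝ := fun i x =>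
    if x ∈ σ then vfuTheta n (u x) * du x (EuclideanSpace.single i 1) else 0 with hf
  set f' : Fin 2 → E2 → (E2 →L[ℝ] ℝ) := fun i x =>
    if x ∈ σ then
      (vfuChi (n * u x) * du x (EuclideanSpace.single i 1)) • du x
        + (vfuTheta n (u x)) • D2 i x
    else 0 with hf'
  have habs : ∀ x, |(n:ℝ) * u x| = |u x| * n := by
    intro x; rw [abs_mul, Nat.abs_cast, mul_comm]
  have hfK : ∀ i x, x ∉ K → f i x = 0 := by
    intro i x hx
    by_cases hxσ : x ∈ σ
    · have hle : |u x| * n ≤ 1 := by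
        by_contra hgt
        exact hx ⟨subset_closure hxσ, le_of_lt (not_le.1 hgt)⟩
      simp only [hf, if_pos hxσ, vfuTheta_zero hle, zero_mul]
    · simp only [hf, if_neg hxσ]
  have hf'K : ∀ i x, x ∉ K → f' i x = 0 := by
    intro i x hx
    by_cases hxσ : x ∈ σ
    · have hle : |u x| * n ≤ 1 := by
        by_contra hgt
        exact hx ⟨subset_closure hxσ, le_of_lt (not_le.1 hgt)⟩
      have h1 : vfuChi ((n:ℝ) * u x) = 0 := vfuChi_zero (by rw [habs x]; exact hle)
      simp only [hf', if_pos hxσ, vfuTheta_zero hle, h1, zero_mul, zero_smul, add_zero]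
    · simp only [hf', if_neg hxσ]
  -- differentiability everywhere
  have hfd : ∀ i x, HasFDerivAt (f i) (f' i x) x := by
    intro i x
    by_cases hxσ : x ∈ σ
    · have h1 : HasFDerivAt (fun y => vfuTheta n (u y))
          ((vfuChi ((n:ℝ) * u x)) • du x) x :=
        (vfuTheta_hasDerivAt n (u x)).comp_hasFDerivAt x (hud x hxσ)
      have h2 := h1.mul (hgid i x hxσ)
      have h3 : HasFDerivAt (fun y => vfuTheta n (u y) * du y (EuclideanSpace.single i 1))
          ((vfuChi ((n:ℝ) * u x) * du x (EuclideanSpace.single i 1)) • du x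
            + (vfuTheta n (u x)) • D2 i x) x := by
        have h2' := h2
        rw [smul_smul, mul_comm (du x (EuclideanSpace.single i 1)), add_comm] at h2'
        exact h2'
      have hcongr : f i =ᶠ[nhds x] fun y => vfuTheta n (u y) * du y (EuclideanSpace.single i 1) := by
        filter_upwards [hσopen.mem_nhds hxσ] with y hy
        simp only [hf, if_pos hy]
      rw [show f' i x = (vfuChi ((n:ℝ) * u x) * du x (EuclideanSpace.single i 1)) • du x
            + (vfuTheta n (u x)) • D2 i x by simp only [hf', if_pos hxσ]]
      exact h3.congr_of_eventuallyEq hcongr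
    · have hxK : x ∉ K := fun h => hxσ (hKσ h)
      have hcongr : f i =ᶠ[nhds x] fun _ => (0:ℝ) := by
        filter_upwards [hKclosed.isOpen_compl.mem_nhds hxK] with y hy
        exact hfK i y hy
      rw [hf'K i x hxK]
      exact (hasFDerivAt_const (0:ℝ) x).congr_of_eventuallyEq hcongr
  -- continuity of f'
  have hθcont : Continuous (vfuTheta n) :=
    continuous_iff_continuousAt.2 fun s => (vfuTheta_hasDerivAt n s).differentiableAt.continuousAt
  have hf'c : ∀ i, Continuous (fun x => f' i x) := by
    intro i
    rw [continuous_iff_continuousAt]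
    intro x
    by_cases hxσ : x ∈ σ
    · have hexpr : ContinuousOn (fun y =>
          (vfuChi ((n:ℝ) * u y) * du y (EuclideanSpace.single i 1)) • du y
            + (vfuTheta n (u y)) • D2 i y) σ := by
        apply ContinuousOn.add
        · exact ((vfuChi_cont.comp_continuousOn (continuousOn_const.mul hucont')).mul
            (hducont.clm_apply continuousOn_const)).smul hducont
        · exact (hθcont.comp_continuousOn hucont').smul (hD2cont i)
      apply ContinuousAt.congr (hexpr.continuousAt (hσopen.mem_nhds hxσ))
      filter_upwards [hσopen.mem_nhds hxσ] with y hy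
      simp only [hf', if_pos hy]
    · have hxK : x ∉ K := fun h => hxσ (hKσ h)
      apply ContinuousAt.congr (continuousAt_const (y := (0 : E2 →L[ℝ] ℝ)))
      filter_upwards [hKclosed.isOpen_compl.mem_nhds hxK] with y hy
      exact (hf'K i y hy).symm
  -- support radius
  obtain ⟨r, hrσ⟩ := hσbd.subset_ball 0
  set R : ℝ := max r 1 with hR
  have hRpos : (0:ℝ) < R := lt_of_lt_of_le zero_lt_one (le_max_right r 1)
  have hsupp : ∀ i x, R ≤ ‖x‖ → f i x = 0 := by
    intro i x hx
    have hxσ : x ∉ σ := by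
      intro hmem
      have := hrσ hmem
      rw [Metric.mem_ball, dist_zero_right] at this
      exact absurd hx (not_le.2 (lt_of_lt_of_le this (le_max_left r 1)))
    simp only [hf, if_neg hxσ]
  have hdivint0 := vfu_div_integral_zero f f' hfd hf'c R hRpos hsupp
  -- restrict to σ
  have hdiv_off : ∀ x, x ∉ σ → (∑ i : Fin 2, f' i x (EuclideanSpace.single i 1)) = 0 := by
    intro x hxσ
    apply Finset.sum_eq_zero
    intro i _
    simp only [hf', if_neg hxσ]
    rfl
  have hdivσ : (∫ x in σ, ∑ i : Fin 2, f' i x (EuclideanSpace.single i 1)) = 0 := by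
    rw [setIntegral_eq_integral_of_forall_compl_eq_zero hdiv_off]
    exact hdivint0
  -- identify the divergence on σ
  have hdiv_eq : ∀ x ∈ σ, (∑ i : Fin 2, f' i x (EuclideanSpace.single i 1))
      = vfuChi ((n:ℝ) * u x) * g x + vfuTheta n (u x) * p x := by
    intro x hxσ
    have : ∀ i : Fin 2, f' i x (EuclideanSpace.single i 1)
        = vfuChi ((n:ℝ) * u x) * (du x (EuclideanSpace.single i 1))^2
          + vfuTheta n (u x) * (D2 i x (EuclideanSpace.single i 1)) := by
      intro i
      simp only [hf', if_pos hxσ, ContinuousLinearMap.add_apply, ContinuousLinearMap.coe_smul',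
        Pi.smul_apply, smul_eq_mul]
      ring
    rw [Finset.sum_congr rfl (fun i _ => this i), Finset.sum_add_distrib,
      ← Finset.mul_sum, ← Finset.mul_sum]
    congr 1
    rw [hlap x hxσ]
  -- integrability of the two pieces
  have hsplit : σ ⊆ K ∪ (σ \ K) := by
    intro x hx
    by_cases h : x ∈ K
    · exact mem_union_left _ h
    · exact mem_union_right _ ⟨hx, h⟩
  have hKmeas : MeasurableSet (σ \ K) := hσmeas.diff hKclosed.measurableSet
  have hIχg : IntegrableOn (fun x => vfuChi ((n:ℝ) * u x) * g x) σ := by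
    apply IntegrableOn.mono_set _ hsplit
    apply IntegrableOn.union
    · apply ContinuousOn.integrableOn_compact hKcpt
      exact ((vfuChi_cont.comp_continuousOn (continuousOn_const.mul hucont')).mul hgcont).mono hKσ
    · apply (integrableOn_zero (μ := volume)).congr_fun _ hKmeas
      rintro x ⟨hx1, hx2⟩
      have hle : |u x| * n ≤ 1 := by
        by_contra hgt
        exact hx2 ⟨subset_closure hx1, le_of_lt (not_le.1 hgt)⟩
      show (0:ℝ) = vfuChi ((n:ℝ) * u x) * g x
      rw [vfuChi_zero (by rw [habs x]; exact hle), zero_mul]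
  have hIθp : IntegrableOn (fun x => vfuTheta n (u x) * p x) σ := by
    apply IntegrableOn.mono_set _ hsplit
    apply IntegrableOn.union
    · apply ContinuousOn.integrableOn_compact hKcpt
      exact ((hθcont.comp_continuousOn hucont').mul hp.continuousOn).mono hKσ
    · apply (integrableOn_zero (μ := volume)).congr_fun _ hKmeas
      rintro x ⟨hx1, hx2⟩
      have hle : |u x| * n ≤ 1 := by
        by_contra hgt
        exact hx2 ⟨subset_closure hx1, le_of_lt (not_le.1 hgt)⟩
      show (0:ℝ) = vfuTheta n (u x) * p x
      rw [vfuTheta_zero hle, zero_mul]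
  refine ⟨hIχg, hIθp, ?_⟩
  have hsum : (∫ x in σ, (vfuChi ((n:ℝ) * u x) * g x + vfuTheta n (u x) * p x)) = 0 := by
    rw [← setIntegral_congr_fun hσmeas hdiv_eq]
    exact hdivσ
  rw [integral_add hIχg hIθp] at hsum
  linarith

lemma vfu_grad_zero (σ : Set E2) (hσopen : IsOpen σ) (hσbd : Bornology.IsBounded σ)
    (u : E2 → ℝ) (hucont : ContinuousOn u (closure σ))
    (husmooth : ContDiffOn ℝ 2 u σ)
    (hbd0 : ∀ x ∈ frontier σ, u x = 0)
    (p : E2 → ℝ) (hp : Continuous p)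
    (hlap : ∀ x ∈ σ, (∑ i : Fin 2,
      fderiv ℝ (fun y => fderiv ℝ u y (EuclideanSpace.single i 1)) x
        (EuclideanSpace.single i 1)) = p x)
    (hmom : ∫ x in σ, u x * p x = 0) :
    ∀ x ∈ σ, u x ≠ 0 →
      (∑ i : Fin 2, (fderiv ℝ u x (EuclideanSpace.single i 1))^2) = 0 := by
  classical
  set g : E2 → ℝ := fun x =>
    ∑ i : Fin 2, (fderiv ℝ u x (EuclideanSpace.single i 1))^2 with hgdef
  intro x₀ hx₀ hux₀
  by_contra hgx₀
  have hgnonneg : ∀ x, 0 ≤ g x :=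
    fun x => Finset.sum_nonneg fun i _ => sq_nonneg _
  have hgpos : 0 < g x₀ := lt_of_le_of_ne (hgnonneg x₀) (Ne.symm hgx₀)
  -- compactness, integrability of u * p and |p|
  have hclcpt : IsCompact (closure σ) :=
    Metric.isCompact_of_isClosed_isBounded isClosed_closure hσbd.closure
  have hIup : IntegrableOn (fun x => u x * p x) σ :=
    ((hucont.mul hp.continuousOn).integrableOn_compact hclcpt).mono_set subset_closure
  have hIabsp : IntegrableOn (fun x => |p x|) σ :=
    ((hp.abs.continuousOn).integrableOn_compact hclcpt).mono_set subset_closure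
  set C : ℝ := ∫ x in σ, |p x| with hC
  have hC0 : 0 ≤ C := setIntegral_nonneg hσopen.measurableSet fun x _ => abs_nonneg _
  -- uniform smallness of the rhs of the energy identity
  have hbound : ∀ n : ℕ, 0 < n →
      |∫ x in σ, vfuChi (n * u x) * g x| ≤ Real.sqrt 2 / n * C := by
    intro n hn
    obtain ⟨hIχg, hIθp, hEn⟩ := vfu_energy σ hσopen hσbd u hucont husmooth hbd0 p hp hlap n
    rw [hEn, abs_neg]
    have hsub : (∫ x in σ, vfuTheta n (u x) * p x)
        = ∫ x in σ, (vfuTheta n (u x) - u x) * p x := by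
      have : (∫ x in σ, (vfuTheta n (u x) - u x) * p x)
          = (∫ x in σ, vfuTheta n (u x) * p x) - ∫ x in σ, u x * p x := by
        rw [← integral_sub hIθp hIup]
        congr 1; ext x; ring
      rw [this, hmom, sub_zero]
    rw [hsub, ← Real.norm_eq_abs]
    have hgint : Integrable (fun x => Real.sqrt 2 / n * |p x|) (volume.restrict σ) :=
      hIabsp.const_mul _
    calc ‖∫ x in σ, (vfuTheta n (u x) - u x) * p x‖
        ≤ ∫ x in σ, Real.sqrt 2 / n * |p x| := by
          apply norm_integral_le_of_norm_le hgint
          apply Filter.Eventually.of_forall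
          intro x
          rw [Real.norm_eq_abs, abs_mul]
          have := vfuTheta_approx hn (u x)
          have := abs_nonneg (p x)
          nlinarith
      _ = Real.sqrt 2 / n * C := by rw [integral_const_mul]
  -- a ball on which |u| is bounded below and g is bounded below
  have hucontAt : ContinuousAt u x₀ :=
    (hucont.mono subset_closure).continuousAt (hσopen.mem_nhds hx₀)
  have hgcontAt : ContinuousAt g x₀ := by
    have hducont : ContinuousOn (fun x => fderiv ℝ u x) σ :=
      husmooth.continuousOn_fderiv_of_isOpen hσopen (by norm_num)
    have : ContinuousOn g σ := by
      apply continuousOn_finset_sum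
      intro i _
      exact (hducont.clm_apply continuousOn_const).pow 2
    exact this.continuousAt (hσopen.mem_nhds hx₀)
  set δ : ℝ := |u x₀| / 2 with hδ
  have hδpos : 0 < δ := by
    have := abs_pos.2 hux₀; positivity
  have hmem : {x | δ < |u x|} ∩ {x | g x₀ / 2 < g x} ∩ σ ∈ nhds x₀ := by
    refine Filter.inter_mem (Filter.inter_mem ?_ ?_) (hσopen.mem_nhds hx₀)
    · exact hucontAt.abs.preimage_mem_nhds (Ioi_mem_nhds (by rw [hδ]; linarith [abs_pos.2 hux₀]))
    · exact hgcontAt.preimage_mem_nhds (Ioi_mem_nhds (by linarith))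
  obtain ⟨rB, hrBpos, hBsub⟩ := Metric.mem_nhds_iff.1 hmem
  set B : Set E2 := Metric.ball x₀ rB with hBdef
  have hBσ : B ⊆ σ := fun x hx => (hBsub hx).2
  have hBu : ∀ x ∈ B, δ ≤ |u x| := fun x hx => le_of_lt (hBsub hx).1.1
  have hBg : ∀ x ∈ B, g x₀ / 2 ≤ g x := fun x hx => le_of_lt (hBsub hx).1.2
  have hvolB : volume B ≠ ⊤ := measure_ball_lt_top.ne
  have hvolBpos : 0 < (volume B).toReal :=
    ENNReal.toReal_pos (Metric.measure_ball_pos volume x₀ hrBpos).ne' hvolB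
  set ε : ℝ := g x₀ / 2 * (volume B).toReal with hε
  have hεpos : 0 < ε := by positivity
  -- choose n₀ such that for n ≥ n₀ we have χ(n u x) = 1 on B
  obtain ⟨n₀, hn₀⟩ := exists_nat_ge (2 / δ)
  -- lower bound for the energy integral for n ≥ n₀
  have hlower : ∀ n : ℕ, n₀ ≤ n → 0 < n → ε ≤ |∫ x in σ, vfuChi (n * u x) * g x| := by
    intro n hn hnpos
    obtain ⟨hIχg, _, _⟩ := vfu_energy σ hσopen hσbd u hucont husmooth hbd0 p hp hlap n
    have hχone : ∀ x ∈ B, vfuChi (n * u x) = 1 := by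
      intro x hx
      apply vfuChi_one
      have h2 : (2:ℝ) ≤ (n:ℝ) * |u x| := by
        have hnn₀ : (n₀:ℝ) ≤ (n:ℝ) := by exact_mod_cast hn
        have h3 : 2 / δ ≤ (n:ℝ) := le_trans hn₀ hnn₀
        have := hBu x hx
        calc (2:ℝ) = (2/δ) * δ := by field_simp
          _ ≤ (n:ℝ) * |u x| := by
              apply mul_le_mul h3 this (le_of_lt hδpos)
              positivity
      rw [abs_mul, Nat.abs_cast]
      have hsqrt2 : Real.sqrt 2 ≤ 2 := by
        nlinarith [Real.sq_sqrt (show (0:ℝ) ≤ 2 by norm_num), Real.sqrt_nonneg 2]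
      linarith
    have hnn : ∀ x, 0 ≤ vfuChi (n * u x) * g x :=
      fun x => mul_nonneg (vfuChi_nonneg _) (hgnonneg x)
    have hstep1 : (∫ x in B, vfuChi (n * u x) * g x) ≤ ∫ x in σ, vfuChi (n * u x) * g x := by
      apply setIntegral_mono_set hIχg
      · exact Filter.Eventually.of_forall hnn
      · exact HasSubset.Subset.eventuallyLE hBσ
    have hstep2 : ε ≤ ∫ x in B, vfuChi (n * u x) * g x := by
      have hIB : IntegrableOn (fun x => vfuChi (n * u x) * g x) B := hIχg.mono_set hBσ
      have := setIntegral_ge_of_const_le_real (c := g x₀ / 2) measurableSet_ball hvolB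
        (fun x hx => by rw [hχone x hx, one_mul]; exact hBg x hx) hIB
      calc ε = g x₀ / 2 * (volume B).toReal := hε
        _ ≤ ∫ x in B, vfuChi (n * u x) * g x := this
    calc ε ≤ ∫ x in σ, vfuChi (n * u x) * g x := le_trans hstep2 hstep1
      _ ≤ |∫ x in σ, vfuChi (n * u x) * g x| := le_abs_self _
  -- choose n large enough to contradict the upper bound
  obtain ⟨n, hnlarge⟩ := exists_nat_gt (max (n₀:ℝ) (max 1 (Real.sqrt 2 * C / ε)))
  have hnn₀ : n₀ ≤ n := by
    have := le_trans (le_max_left (n₀:ℝ) _) (le_of_lt hnlarge)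
    exact_mod_cast this
  have hnpos : 0 < n := by
    have h1 : (1:ℝ) ≤ (n:ℝ) :=
      le_trans (le_trans (le_max_left 1 _) (le_max_right (n₀:ℝ) _)) (le_of_lt hnlarge)
    exact_mod_cast Nat.one_le_cast.1 h1
  have hub := hbound n hnpos
  have hlb := hlower n hnn₀ hnpos
  have hfinal : Real.sqrt 2 / n * C < ε := by
    have hnR : Real.sqrt 2 * C / ε < (n:ℝ) :=
      lt_of_le_of_lt (le_trans (le_max_right 1 _) (le_max_right (n₀:ℝ) _)) hnlarge
    have hnRpos : (0:ℝ) < n := by exact_mod_cast hnpos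
    rw [div_mul_eq_mul_div, div_lt_iff₀ hnRpos]
    calc Real.sqrt 2 * C = (Real.sqrt 2 * C / ε) * ε := by field_simp
      _ < (n:ℝ) * ε := by
          apply mul_lt_mul_of_pos_right hnR hεpos
      _ = ε * n := mul_comm _ _
  linarith

lemma vfu_decomp (y : EuclideanSpace ℝ (Fin 2)) :
    y = ∑ i : Fin 2, y i • EuclideanSpace.single i (1:ℝ) := by
  conv_lhs => rw [← (EuclideanSpace.basisFun (Fin 2) ℝ).sum_repr y]
  refine Finset.sum_congr rfl fun i _ => ?_
  rw [EuclideanSpace.basisFun_apply, EuclideanSpace.basisFun_repr]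

lemma vfu_endgame (σ : Set E2) (hσopen : IsOpen σ) (hσbd : Bornology.IsBounded σ)
    (u : E2 → ℝ) (hucont : ContinuousOn u (closure σ))
    (husmooth : ContDiffOn ℝ 2 u σ)
    (hbd0 : ∀ x ∈ frontier σ, u x = 0)
    (hg0 : ∀ x ∈ σ, u x ≠ 0 →
      (∑ i : Fin 2, (fderiv ℝ u x (EuclideanSpace.single i 1))^2) = 0) :
    ∀ x ∈ σ, u x = 0 := by
  classical
  intro x₀ hx₀
  by_contra hux₀
  set U : Set E2 := {x | x ∈ σ ∧ u x ≠ 0} with hUdef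
  have hUσ : U ⊆ σ := fun x hx => hx.1
  have hUopen : IsOpen U := by
    rw [isOpen_iff_mem_nhds]
    rintro x ⟨hxσ, hxu⟩
    have hcAt : ContinuousAt u x :=
      (hucont.mono subset_closure).continuousAt (hσopen.mem_nhds hxσ)
    have h1 : {y | u y ≠ 0} ∈ nhds x :=
      hcAt.preimage_mem_nhds (isOpen_compl_singleton.mem_nhds hxu)
    exact Filter.inter_mem (hσopen.mem_nhds hxσ) h1
  have hx₀U : x₀ ∈ U := ⟨hx₀, hux₀⟩
  -- fderiv vanishes on U
  have hderiv0 : ∀ x ∈ U, fderiv ℝ u x = 0 := by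
    rintro x ⟨hxσ, hxu⟩
    have hsum := hg0 x hxσ hxu
    have hzero : ∀ i : Fin 2, fderiv ℝ u x (EuclideanSpace.single i 1) = 0 := by
      intro i
      have := (Finset.sum_eq_zero_iff_of_nonneg
        (fun j _ => sq_nonneg (fderiv ℝ u x (EuclideanSpace.single j 1)))).1 hsum i
        (Finset.mem_univ i)
      exact pow_eq_zero_iff (by norm_num) |>.1 this
    -- extend to all of E2 via the orthonormal basis
    apply ContinuousLinearMap.ext
    intro y
    have hdec := vfu_decomp y
    rw [ContinuousLinearMap.zero_apply]
    conv_lhs => rw [hdec]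
    rw [map_sum]
    apply Finset.sum_eq_zero
    intro i _
    rw [_root_.map_smul, hzero i, smul_zero]
  -- local constancy on U
  have hloc : ∀ x ∈ U, ∃ r > 0, Metric.ball x r ⊆ U ∧
      ∀ y ∈ Metric.ball x r, u y = u x := by
    intro x hx
    obtain ⟨r, hrpos, hrsub⟩ := Metric.isOpen_iff.1 hUopen x hx
    refine ⟨r, hrpos, hrsub, ?_⟩
    intro y hy
    apply Convex.is_const_of_fderivWithin_eq_zero (𝕜 := ℝ) (convex_ball x r)
    · exact (husmooth.differentiableOn (by norm_num)).mono
        (fun z hz => hUσ (hrsub hz))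
    · intro z hz
      rw [fderivWithin_of_isOpen Metric.isOpen_ball hz]
      exact hderiv0 z (hrsub hz)
    · exact hy
    · exact Metric.mem_ball_self hrpos
  -- the connected component of x₀ in U
  set Ccomp : Set E2 := connectedComponentIn U x₀ with hCdef
  have hCopen : IsOpen Ccomp := hUopen.connectedComponentIn
  have hCsub : Ccomp ⊆ U := connectedComponentIn_subset U x₀
  have hx₀C : x₀ ∈ Ccomp := mem_connectedComponentIn hx₀U
  -- u is constant = u x₀ on Ccomp
  set S1 : Set E2 := {x | x ∈ U ∧ u x = u x₀} with hS1def
  set S2 : Set E2 := {x | x ∈ U ∧ u x ≠ u x₀} with hS2def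
  have hS1open : IsOpen S1 := by
    rw [isOpen_iff_mem_nhds]
    rintro x ⟨hxU, hxval⟩
    obtain ⟨r, hrpos, hrsub, hconst⟩ := hloc x hxU
    obtain ⟨r, hrpos, hrsub, hconst⟩ := hloc x hxU
    filter_upwards [Metric.ball_mem_nhds x hrpos] with y hy
    exact ⟨hrsub hy, (hconst y hy).trans hxval⟩
  have hS2open : IsOpen S2 := by
    rw [isOpen_iff_mem_nhds]
    rintro x ⟨hxU, hxval⟩
    have hcAt : ContinuousAt u x :=
      (hucont.mono subset_closure).continuousAt (hσopen.mem_nhds (hUσ hxU))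
    have h1 : {y | u y ≠ u x₀} ∈ nhds x :=
      hcAt.preimage_mem_nhds (isOpen_compl_singleton.mem_nhds hxval)
    exact Filter.inter_mem (hUopen.mem_nhds hxU) h1
  have hCS1 : Ccomp ⊆ S1 := by
    apply IsPreconnected.subset_left_of_subset_union hS1open hS2open
    · rw [Set.disjoint_iff]
      rintro x ⟨⟨_, h1⟩, ⟨_, h2⟩⟩
      exact h2 h1
    · intro x hx
      by_cases h : u x = u x₀
      · exact mem_union_left _ ⟨hCsub hx, h⟩
      · exact mem_union_right _ ⟨hCsub hx, h⟩
    · exact ⟨x₀, hx₀C, hx₀U, rfl⟩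
    · exact (isPreconnected_connectedComponentIn)
  -- frontier of the component is nonempty
  have hCbd : Bornology.IsBounded Ccomp := hσbd.subset (hCsub.trans hUσ)
  have hCne : Ccomp ≠ univ := by
    intro h
    have : Bornology.IsBounded (univ : Set E2) := h ▸ hCbd
    obtain ⟨Rb, hRb⟩ := this.subset_ball 0
    have hpt : (EuclideanSpace.single 0 (|Rb| + 1) : E2) ∈ Metric.ball (0:E2) Rb :=
      hRb (mem_univ _)
    rw [Metric.mem_ball, dist_zero_right, EuclideanSpace.norm_single, Real.norm_eq_abs] at hpt
    have : |(|Rb| + 1)| = |Rb| + 1 := abs_of_pos (by positivity)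
    rw [this] at hpt
    linarith [le_abs_self Rb]
  have hfront : (frontier Ccomp).Nonempty := by
    by_contra h
    rw [not_nonempty_iff_eq_empty] at h
    have hclopen : IsClopen Ccomp := isClopen_iff_frontier_eq_empty.2 h
    rcases isClopen_iff.1 hclopen with h1 | h1
    · rw [h1] at hx₀C; exact hx₀C
    · exact hCne h1
  obtain ⟨y, hy⟩ := hfront
  have hyncl : y ∈ closure Ccomp := frontier_subset_closure hy
  have hynotC : y ∉ Ccomp := by
    intro h
    rw [frontier, hCopen.interior_eq] at hy
    exact hy.2 h
  -- u y = u x₀ by continuity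
  have hyclσ : y ∈ closure σ := closure_mono (hCsub.trans hUσ) hyncl
  have huy : u y = u x₀ := by
    have hcwa : ContinuousWithinAt u Ccomp y :=
      (hucont y hyclσ).mono (subset_closure.trans (closure_mono (hCsub.trans hUσ)))
    have h1 : Filter.Tendsto u (nhdsWithin y Ccomp) (nhds (u y)) := hcwa
    have h2 : Filter.Tendsto u (nhdsWithin y Ccomp) (nhds (u x₀)) := by
      apply Filter.Tendsto.congr' _ tendsto_const_nhds
      filter_upwards [self_mem_nhdsWithin] with z hz
      exact ((hCS1 hz).2).symm
    haveI : (nhdsWithin y Ccomp).NeBot := mem_closure_iff_nhdsWithin_neBot.1 hyncl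
    exact tendsto_nhds_unique h1 h2
  have huy0 : u y ≠ 0 := by rw [huy]; exact hux₀
  -- y must be in σ, hence in U
  have hyσ : y ∈ σ := by
    by_cases h : y ∈ σ
    · exact h
    · exfalso
      apply huy0
      apply hbd0
      rw [hσopen.frontier_eq]
      exact ⟨hyclσ, h⟩
  have hyU : y ∈ U := ⟨hyσ, huy0⟩
  -- the component of y meets Ccomp, so y ∈ Ccomp, contradiction
  have hyCopen : IsOpen (connectedComponentIn U y) := hUopen.connectedComponentIn
  have hyC : y ∈ connectedComponentIn U y := mem_connectedComponentIn hyU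
  obtain ⟨z, hz1, hz2⟩ : (connectedComponentIn U y ∩ Ccomp).Nonempty := by
    rw [_root_.mem_closure_iff] at hyncl
    exact hyncl _ hyCopen hyC
  have he1 : connectedComponentIn U y = connectedComponentIn U z :=
    connectedComponentIn_eq hz1
  have he2 : Ccomp = connectedComponentIn U z := connectedComponentIn_eq hz2
  exact hynotC (he2 ▸ he1 ▸ hyC)

lemma vfu_scalar (σ : Set E2) (hσopen : IsOpen σ) (hσbd : Bornology.IsBounded σ)
    (u : E2 → ℝ) (hucont : ContinuousOn u (closure σ))
    (husmooth : ContDiffOn ℝ 2 u σ)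
    (hbd0 : ∀ x ∈ frontier σ, u x = 0)
    (p : E2 → ℝ) (hp : Continuous p)
    (hlap : ∀ x ∈ σ, (∑ i : Fin 2,
      fderiv ℝ (fun y => fderiv ℝ u y (EuclideanSpace.single i 1)) x
        (EuclideanSpace.single i 1)) = p x)
    (hmom : ∫ x in σ, u x * p x = 0) :
    ∀ x ∈ σ, u x = 0 :=
  vfu_endgame σ hσopen hσbd u hucont husmooth hbd0
    (vfu_grad_zero σ hσopen hσbd u hucont husmooth hbd0 p hp hlap hmom)


end VFUAux

/-- Unisolvence step for the local virtual face space: if `v` is continuous on `σ̄`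
and twice continuously differentiable on the open polygon `σ`, vanishes on the
boundary `∂σ`, has affine Laplacian on `σ`, and all its moments against affine
vector fields vanish, then `v ≡ 0` on `σ`. -/
theorem virtual_face_unisolvence {dd : ℕ}
    (σ : Set (EuclideanSpace ℝ (Fin 2))) (hσopen : IsOpen σ) (hσbd : Bornology.IsBounded σ)
    (v : EuclideanSpace ℝ (Fin 2) → EuclideanSpace ℝ (Fin dd))
    (hvcont : ContinuousOn v (closure σ))
    (hvsmooth : ContDiffOn ℝ 2 v σ)
    (hbd : ∀ x ∈ frontier σ, v x = 0)
    (hlap : ∃ p, IsAffineField p ∧ ∀ x ∈ σ, lapl v x = p x)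
    (hmom : ∀ p : EuclideanSpace ℝ (Fin 2) → EuclideanSpace ℝ (Fin dd),
      IsAffineField p → ∫ x in σ, ⟪v x, p x⟫ = 0) :
    ∀ x ∈ σ, v x = 0 := by
  classical
  obtain ⟨p, hpaff, hplap⟩ := hlap
  obtain ⟨A, c, hpAc⟩ := hpaff
  have hpcont : Continuous p := by
    have : Continuous fun x => A x + c := (A.continuous.add continuous_const)
    exact this.congr fun x => (hpAc x).symm
  intro x hx
  have hcoord : ∀ k : Fin dd, v x k = 0 := by
    intro k
    set prk : EuclideanSpace ℝ (Fin dd) →L[ℝ] ℝ := EuclideanSpace.proj k with hprk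
    have hprk_apply : ∀ w : EuclideanSpace ℝ (Fin dd), prk w = w k := fun w => rfl
    set u : E2 → ℝ := fun y => v y k with hu
    set pk : E2 → ℝ := fun y => prk (p y) with hpk
    have huproj : u = fun y => prk (v y) := rfl
    have hucont : ContinuousOn u (closure σ) := by
      rw [huproj]; exact prk.continuous.comp_continuousOn hvcont
    have husmooth : ContDiffOn ℝ 2 u σ := by
      rw [huproj]; exact prk.contDiff.comp_contDiffOn hvsmooth
    have hbd0 : ∀ y ∈ frontier σ, u y = 0 := by
      intro y hy; rw [hu]; simp only []; rw [hbd y hy]; rfl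
    have hpkcont : Continuous pk := prk.continuous.comp hpcont
    -- identify the scalar Laplacian
    have hvd : ∀ y ∈ σ, HasFDerivAt v (fderiv ℝ v y) y := fun y hy =>
      ((hvsmooth.differentiableOn (by norm_num)).differentiableAt
        (hσopen.mem_nhds hy)).hasFDerivAt
    have hdu_eq : ∀ y ∈ σ, fderiv ℝ u y = prk.comp (fderiv ℝ v y) := by
      intro y hy
      have h1 : HasFDerivAt (fun z => prk (v z)) (prk.comp (fderiv ℝ v y)) y :=
        prk.hasFDerivAt.comp y (hvd y hy)
      rw [huproj]
      exact h1.fderiv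
    have hvd1 : ContDiffOn ℝ 1 (fderiv ℝ v) σ := hvsmooth.fderiv_of_isOpen hσopen (by norm_num)
    have hlapk : ∀ y ∈ σ, (∑ i : Fin 2,
        fderiv ℝ (fun z => fderiv ℝ u z (EuclideanSpace.single i 1)) y
          (EuclideanSpace.single i 1)) = pk y := by
      intro y hy
      have hterm : ∀ i : Fin 2,
          fderiv ℝ (fun z => fderiv ℝ u z (EuclideanSpace.single i 1)) y
            (EuclideanSpace.single i 1)
          = prk (fderiv ℝ (fun z => fderiv ℝ v z (EuclideanSpace.single i 1)) y
              (EuclideanSpace.single i 1)) := by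
        intro i
        have he : (fun z => fderiv ℝ u z (EuclideanSpace.single i 1))
            =ᶠ[nhds y] (fun z => prk (fderiv ℝ v z (EuclideanSpace.single i 1))) := by
          filter_upwards [hσopen.mem_nhds hy] with z hz
          rw [hdu_eq z hz]; rfl
        have hdiffv : HasFDerivAt (fun z => fderiv ℝ v z (EuclideanSpace.single i 1))
            (fderiv ℝ (fun z => fderiv ℝ v z (EuclideanSpace.single i 1)) y) y := by
          apply DifferentiableAt.hasFDerivAt
          have : ContDiffOn ℝ 1 (fun z => fderiv ℝ v z (EuclideanSpace.single i 1)) σ :=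
            hvd1.clm_apply contDiffOn_const
          exact (this.differentiableOn (by norm_num)).differentiableAt (hσopen.mem_nhds hy)
        have hcomp : HasFDerivAt (fun z => prk (fderiv ℝ v z (EuclideanSpace.single i 1)))
            (prk.comp (fderiv ℝ (fun z => fderiv ℝ v z (EuclideanSpace.single i 1)) y)) y :=
          prk.hasFDerivAt.comp y hdiffv
        rw [Filter.EventuallyEq.fderiv_eq he, hcomp.fderiv]
        rfl
      rw [Finset.sum_congr rfl fun i _ => hterm i, ← map_sum]
      have : (∑ i : Fin 2,
          fderiv ℝ (fun z => fderiv ℝ v z (EuclideanSpace.single i 1)) y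
            (EuclideanSpace.single i 1)) = lapl v y := rfl
      rw [this, hplap y hy]
    -- the affine moment field concentrated on coordinate k
    have hmomk : ∫ z in σ, u z * pk z = 0 := by
      set q : E2 → EuclideanSpace ℝ (Fin dd) :=
        fun z => (pk z) • EuclideanSpace.single k (1:ℝ) with hq
      have hqaff : IsAffineField q := by
        refine ⟨(prk.comp A).smulRight (EuclideanSpace.single k (1:ℝ)),
          (prk c) • EuclideanSpace.single k (1:ℝ), ?_⟩
        intro z
        rw [hq]
        simp only [ContinuousLinearMap.smulRight_apply, ContinuousLinearMap.comp_apply]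
        rw [hpk]
        simp only []
        rw [hpAc z, map_add, add_smul]
      have h0 := hmom q hqaff
      rw [← h0]
      apply setIntegral_congr_fun hσopen.measurableSet
      intro z _
      rw [hq]
      simp only []
      rw [real_inner_smul_right]
      have : ⟪v z, EuclideanSpace.single k (1:ℝ)⟫ = v z k := by
        rw [EuclideanSpace.inner_single_right]
        simp
      rw [this]
      ring
    exact vfu_scalar σ hσopen hσbd u hucont husmooth hbd0 pk hpkcont hlapk hmomk x hx
  -- conclude v x = 0
  have : v x = ∑ k : Fin dd, (v x k) • EuclideanSpace.single k (1:ℝ) := by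
    conv_lhs => rw [← (EuclideanSpace.basisFun (Fin dd) ℝ).sum_repr (v x)]
    refine Finset.sum_congr rfl fun i _ => ?_
    rw [EuclideanSpace.basisFun_apply, EuclideanSpace.basisFun_repr]
  rw [this]
  apply Finset.sum_eq_zero
  intro k _
  rw [hcoord k, zero_smul]
end

section
/- Let λ_n ≥ 0, u_n ≤ 0 with λ_n u_n = 0, F ≥ 0, λ_τ ∈ ℝ^{d−1} with |λ_τ| ≤ F λ_n, and v ∈ ℝ^{d−1} with λ_τ · v = F λ_n |v|. Then for every admissible test multiplier (μ_n, μ_τ) with μ_n ≥ 0 and |μ_τ| ≤ F λ_n, the variational inequality (μ_n − λ_n) u_n + (μ_τ − λ_τ) · v ≤ 0 holds. -/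
open scoped RealInnerProductSpace

theorem contact_conditions_imply_variational_inequality {d : ℕ}
    (F lamN uN : ℝ) (hlamN : 0 ≤ lamN) (huN : uN ≤ 0) (hcompl : lamN * uN = 0)
    (hF : 0 ≤ F)
    (lamT v : EuclideanSpace ℝ (Fin (d - 1)))
    (hbound : ‖lamT‖ ≤ F * lamN)
    (hslide : ⟪lamT, v⟫ = F * lamN * ‖v‖) :
    ∀ (muN : ℝ) (muT : EuclideanSpace ℝ (Fin (d - 1))),
      0 ≤ muN → ‖muT‖ ≤ F * lamN →
      (muN - lamN) * uN + ⟪muT - lamT, v⟫ ≤ 0 := by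
  intro muN muT hmuN hmuT
  have h1 : (muN - lamN) * uN ≤ 0 := by
    have : muN * uN ≤ 0 := mul_nonpos_of_nonneg_of_nonpos hmuN huN
    nlinarith
  have h2 : ⟪muT - lamT, v⟫ ≤ 0 := by
    rw [inner_sub_left, hslide]
    have := real_inner_le_norm muT v
    nlinarith [norm_nonneg v, norm_nonneg muT]
  linarith
end

section
/- Conversely: let F ≥ 0, λ_n, u_n ∈ ℝ, λ_τ, v ∈ ℝ^{d−1}, and suppose λ_n ≥ 0, |λ_τ| ≤ F λ_n, and that for every (μ_n, μ_τ) with μ_n ≥ 0 and |μ_τ| ≤ F λ_n one has (μ_n − λ_n) u_n + (μ_τ − λ_τ) · v ≤ 0. Then u_n ≤ 0, λ_n u_n = 0, and λ_τ · v = F λ_n |v|. -/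
open scoped RealInnerProductSpace

theorem variational_inequality_implies_contact_conditions {d : ℕ}
    (F lamN uN : ℝ) (hF : 0 ≤ F) (hlamN : 0 ≤ lamN)
    (lamT v : EuclideanSpace ℝ (Fin (d - 1)))
    (hbound : ‖lamT‖ ≤ F * lamN)
    (hVI : ∀ (muN : ℝ) (muT : EuclideanSpace ℝ (Fin (d - 1))),
      0 ≤ muN → ‖muT‖ ≤ F * lamN →
      (muN - lamN) * uN + ⟪muT - lamT, v⟫ ≤ 0) :
    uN ≤ 0 ∧ lamN * uN = 0 ∧ ⟪lamT, v⟫ = F * lamN * ‖v‖ := by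
  have hFl : 0 ≤ F * lamN := mul_nonneg hF hlamN
  have h1 := hVI (lamN + 1) lamT (by linarith) hbound
  simp [sub_self] at h1
  have huN : uN ≤ 0 := by linarith
  have h2 := hVI 0 lamT le_rfl hbound
  simp [sub_self] at h2
  have hln : lamN * uN = 0 := by nlinarith
  refine ⟨huN, hln, ?_⟩
  rcases eq_or_ne v 0 with hv | hv
  · simp [hv]
  · have hvn : (0:ℝ) < ‖v‖ := norm_pos_iff.mpr hv
    set muT := ((F * lamN) / ‖v‖) • v with hmuT
    have hnmu : ‖muT‖ = F * lamN := by
      rw [hmuT, norm_smul, Real.norm_eq_abs, abs_div, abs_of_nonneg hFl,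
        abs_of_nonneg hvn.le, div_mul_cancel₀ _ hvn.ne']
    have h3 := hVI lamN muT hlamN (le_of_eq hnmu)
    rw [inner_sub_left] at h3
    have hmuv : ⟪muT, v⟫ = F * lamN * ‖v‖ := by
      rw [hmuT, real_inner_smul_left, real_inner_self_eq_norm_sq]
      field_simp
    have hCS : ⟪lamT, v⟫ ≤ F * lamN * ‖v‖ := by
      calc ⟪lamT, v⟫ ≤ ‖lamT‖ * ‖v‖ := real_inner_le_norm _ _
        _ ≤ F * lamN * ‖v‖ := by nlinarith
    have : F * lamN * ‖v‖ ≤ ⟪lamT, v⟫ := by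
      rw [hmuv] at h3; linarith
    linarith
end
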